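/- Let m be a nonnegative integer, k = 4m+3, and let x, y, z, v, w be nonnegative integers less than 2^{n+1} such that x ⊕ y ⊕ z = 0 and y = ⌊(x+z)/k⌋, and x ⊕ v ⊕ w = 0 and v < ⌊(x+w)/k⌋. Then there exists a nonnegative integer t with t + 1 ≤ n such that the binary digits satisfy y_{n−j} = v_{n−j} and z_{n−j} = w_{n−j} for all j = 0, 1, ..., t, and y_{n−t−1} > v_{n−t−1}. In particular, y > v. -/

import Mathlib

/-- The i-th binary digit of x. -/
def bitd (x i : ℕ) : ℕ := x / 2 ^ i % 2

private lemma aux_mod (u v : ℕ) : (u ^^^ v) % 2 = u % 2 ^^^ v % 2 := by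
  rw [Nat.xor_mod_two_eq]
  rcases Nat.mod_two_eq_zero_or_one u with h | h <;>
    rcases Nat.mod_two_eq_zero_or_one v with h' | h' <;>
      rw [h, h'] <;> simp <;> omega

private lemma aux_split (u v : ℕ) :
    u ^^^ v = 2 * (u / 2 ^^^ v / 2) + (u % 2 ^^^ v % 2) := by
  have hdiv : (u ^^^ v) / 2 = u / 2 ^^^ v / 2 := by
    apply Nat.eq_of_testBit_eq
    intro i
    simp [Nat.testBit_div_two, Nat.testBit_xor]
  have hmod := aux_mod u v
  omega

private lemma step_lemma (m : ℕ) : ∀ a x : ℕ,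
    x + (x ^^^ a) < (4 * m + 3) * (a + 1) →
    x + (x ^^^ (a + 1)) + 2 ≤ (4 * m + 3) * (a + 1) := by
  intro a
  induction a using Nat.strong_induction_on with
  | _ a ih =>
    intro x h
    rcases Nat.mod_two_eq_zero_or_one a with ha2 | ha2
    · -- a even
      obtain ⟨s, e, he, ha, he2⟩ : ∃ s e, e ≤ 1 ∧ a = 4 * s + 2 * e ∧ a / 2 % 2 = e :=
        ⟨a / 4, a / 2 % 2, by omega, by omega, rfl⟩
      obtain ⟨R, hR⟩ : ∃ R, (4 * m + 3) * (a + 1) = 4 * R + (2 * e + 3) :=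
        ⟨m * (a + 1) + 3 * s + e, by rw [ha]; ring⟩
      rw [hR] at h ⊢
      have e1 := aux_split x a
      have e2 := aux_split x (a + 1)
      have d2 : (a + 1) / 2 = a / 2 := by omega
      have m2 : (a + 1) % 2 = 1 := by omega
      rw [d2, m2] at e2
      rw [ha2] at e1
      have hXm := aux_mod (x / 2) (a / 2)
      rw [he2] at hXm
      rcases Nat.mod_two_eq_zero_or_one x with hx2 | hx2 <;> rw [hx2] at e1 e2
      · -- x even : mod-4 argument
        rw [show (0 : ℕ) ^^^ 0 = 0 from rfl] at e1
        rw [show (0 : ℕ) ^^^ 1 = 1 from rfl] at e2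
        rcases Nat.mod_two_eq_zero_or_one (x / 2) with hc | hc <;> rw [hc] at hXm <;>
          rcases (show e = 0 ∨ e = 1 by omega) with rfl | rfl <;>
            simp only [Nat.zero_xor, Nat.xor_zero, Nat.xor_self] at hXm <;>
              omega
      · rw [show (1 : ℕ) ^^^ 0 = 1 from rfl] at e1
        rw [show (1 : ℕ) ^^^ 1 = 0 from rfl] at e2
        omega
    · -- a odd
      have e1 := aux_split x a
      have e2 := aux_split x (a + 1)
      have d2 : (a + 1) / 2 = a / 2 + 1 := by omega
      have m2 : (a + 1) % 2 = 0 := by omega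
      rw [d2, m2] at e2
      rw [ha2] at e1
      have hsplit : (4 * m + 3) * (a + 1) = 2 * ((4 * m + 3) * (a / 2 + 1)) := by
        rw [show a + 1 = 2 * (a / 2 + 1) from by omega]; ring
      rw [hsplit] at h ⊢
      have hyp' : x / 2 + (x / 2 ^^^ a / 2) < (4 * m + 3) * (a / 2 + 1) := by
        rcases Nat.mod_two_eq_zero_or_one x with hx2 | hx2 <;> rw [hx2] at e1
        · rw [show (0 : ℕ) ^^^ 1 = 1 from rfl] at e1; omega
        · rw [show (1 : ℕ) ^^^ 1 = 0 from rfl] at e1; omega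
      have ihh := ih (a / 2) (by omega) (x / 2) hyp'
      rcases Nat.mod_two_eq_zero_or_one x with hx2 | hx2 <;> rw [hx2] at e2 <;>
        simp only [Nat.zero_xor, Nat.xor_zero] at e2 <;> omega

private lemma mono_lemma (m x y : ℕ)
    (h : x + (x ^^^ y) < (4 * m + 3) * (y + 1)) :
    ∀ c, x + (x ^^^ (y + c)) < (4 * m + 3) * (y + c + 1) := by
  intro c
  induction c with
  | zero => simpa using h
  | succ c ihc =>
    have hs := step_lemma m (y + c) x ihc
    have hmul : (4 * m + 3) * (y + c + 1) ≤ (4 * m + 3) * (y + c + 1 + 1) :=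
      Nat.mul_le_mul_left _ (by omega)
    show x + (x ^^^ (y + c + 1)) < (4 * m + 3) * (y + c + 1 + 1)
    omega

private lemma testBit_true_of_ge (u n : ℕ) (h1 : u < 2 ^ (n + 1)) (h2 : 2 ^ n ≤ u) :
    u.testBit n = true := by
  have hp : 0 < 2 ^ n := Nat.two_pow_pos n
  have d1 : 1 ≤ u / 2 ^ n := (Nat.le_div_iff_mul_le hp).mpr (by omega)
  have d2 : u / 2 ^ n < 2 := (Nat.div_lt_iff_lt_mul hp).mpr (by
    have : 2 ^ (n + 1) = 2 ^ n * 2 := by ring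
    omega)
  have : u / 2 ^ n = 1 := by omega
  simp [Nat.testBit_eq_decide_div_mod_eq, this]

private lemma lt_of_testBit_false (u n : ℕ) (h1 : u < 2 ^ (n + 1))
    (h2 : u.testBit n = false) : u < 2 ^ n := by
  by_contra hge
  push_neg at hge
  rw [testBit_true_of_ge u n h1 hge] at h2
  exact Bool.noConfusion h2

private lemma bitd_of_testBit (u i : ℕ) : bitd u i = if u.testBit i then 1 else 0 := by
  unfold bitd
  rcases Nat.mod_two_eq_zero_or_one (u / 2 ^ i) with h | h <;>
    simp [Nat.testBit_eq_decide_div_mod_eq, h]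

theorem stmt10 (m k n : ℕ) (hk : k = 4 * m + 3) (x y z v w : ℕ)
    (hx : x < 2 ^ (n + 1)) (hy : y < 2 ^ (n + 1)) (hz : z < 2 ^ (n + 1))
    (hv : v < 2 ^ (n + 1)) (hw : w < 2 ^ (n + 1))
    (h1 : x ^^^ y ^^^ z = 0) (h2 : y = (x + z) / k)
    (h3 : x ^^^ v ^^^ w = 0) (h4 : v < (x + w) / k) :
    (∃ t : ℕ, t + 1 ≤ n ∧
      (∀ j ≤ t, bitd y (n - j) = bitd v (n - j) ∧ bitd z (n - j) = bitd w (n - j)) ∧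
      bitd v (n - (t + 1)) < bitd y (n - (t + 1))) ∧
    v < y := by
  subst hk
  have hkpos : 0 < 4 * m + 3 := by omega
  have hzq : x ^^^ y = z := xor_eq_zero_iff.mp h1
  have hwq : x ^^^ v = w := xor_eq_zero_iff.mp h3
  -- Part A : v < y
  have hvy : v < y := by
    by_contra hle
    push_neg at hle
    obtain ⟨c, rfl⟩ := Nat.exists_eq_add_of_le hle
    have hbase : x + (x ^^^ y) < (4 * m + 3) * (y + 1) := by
      rw [hzq]
      have hq : (x + z) / (4 * m + 3) < y + 1 := by omega
      have h' := (Nat.div_lt_iff_lt_mul hkpos).mp hq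
      rw [Nat.mul_comm] at h'
      exact h'
    have hmono := mono_lemma m x y hbase c
    have h4' : (4 * m + 3) * (y + c + 1) ≤ x + w := by
      have hq : y + c + 1 ≤ (x + w) / (4 * m + 3) := h4
      have h' := (Nat.le_div_iff_mul_le hkpos).mp hq
      rw [Nat.mul_comm] at h'
      exact h'
    rw [← hwq] at h4'
    exact absurd (lt_of_lt_of_le hmono h4') (lt_irrefl _)
  -- y < 2^n
  have hpow : 2 ^ (n + 1) = 2 * 2 ^ n := by ring
  have hy2 : y < 2 ^ n := by
    by_contra hge
    push_neg at hge
    have hty : y.testBit n = true := testBit_true_of_ge y n hy hge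
    have hyx : x ^^^ z = y := by rw [← hzq, ← Nat.xor_assoc, Nat.xor_self, Nat.zero_xor]
    have htb : (x.testBit n).xor (z.testBit n) = true := by
      rw [← Nat.testBit_xor, hyx, hty]
    have hky : (4 * m + 3) * y ≤ x + z := by
      have h' := Nat.div_mul_le_self (x + z) (4 * m + 3)
      rw [← h2, Nat.mul_comm] at h'
      exact h'
    have h3y : 3 * 2 ^ n ≤ x + z :=
      le_trans (Nat.mul_le_mul (by omega) hge) hky
    cases hxb : x.testBit n with
    | false =>
      have : x < 2 ^ n := lt_of_testBit_false x n hx hxb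
      omega
    | true =>
      rw [hxb] at htb
      have hzb : z.testBit n = false := by
        cases hzb : z.testBit n with
        | false => rfl
        | true => rw [hzb] at htb; simp at htb
      have : z < 2 ^ n := lt_of_testBit_false z n hz hzb
      omega
  have hv2 : v < 2 ^ n := lt_trans hvy hy2
  -- most significant differing bit
  have hd0 : y ^^^ v ≠ 0 := by
    intro hcon
    rw [xor_eq_zero_iff] at hcon
    omega
  obtain ⟨i, hi1, hi2⟩ := Nat.exists_most_significant_bit hd0
  have hdlt : y ^^^ v < 2 ^ n := Nat.xor_lt_two_pow hy2 hv2
  have hin : i < n := by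
    by_contra hni
    push_neg at hni
    have : y ^^^ v < 2 ^ i :=
      lt_of_lt_of_le hdlt (Nat.pow_le_pow_right (by norm_num) hni)
    rw [Nat.testBit_lt_two_pow this] at hi1
    exact Bool.noConfusion hi1
  have hag : ∀ jj, i < jj → y.testBit jj = v.testBit jj := by
    intro jj hjj
    have h' := hi2 jj hjj
    rw [Nat.testBit_xor] at h'
    cases hyj : y.testBit jj <;> cases hvj : v.testBit jj <;>
      rw [hyj, hvj] at h' <;> simp_all
  have hzw : z ^^^ w = y ^^^ v := by
    rw [← hzq, ← hwq]
    apply Nat.eq_of_testBit_eq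
    intro j
    rw [Nat.testBit_xor, Nat.testBit_xor, Nat.testBit_xor, Nat.testBit_xor]
    cases x.testBit j <;> cases y.testBit j <;> cases v.testBit j <;> simp
  have hagzw : ∀ jj, i < jj → z.testBit jj = w.testBit jj := by
    intro jj hjj
    have h' := hi2 jj hjj
    rw [← hzw, Nat.testBit_xor] at h'
    cases hzj : z.testBit jj <;> cases hwj : w.testBit jj <;>
      rw [hzj, hwj] at h' <;> simp_all
  have hyv_i : y.testBit i = true ∧ v.testBit i = false := by
    have hx' := hi1
    rw [Nat.testBit_xor] at hx'
    cases hyi : y.testBit i <;> cases hvi : v.testBit i <;>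
      rw [hyi, hvi] at hx'
    · simp at hx'
    · exact absurd (Nat.lt_of_testBit i hyi hvi hag) (by omega)
    · exact ⟨rfl, rfl⟩
    · simp at hx'
  refine ⟨⟨n - 1 - i, by omega, ?_, ?_⟩, hvy⟩
  · intro j hj
    have hlt : i < n - j := by omega
    constructor
    · rw [bitd_of_testBit, bitd_of_testBit, hag _ hlt]
    · rw [bitd_of_testBit, bitd_of_testBit, hagzw _ hlt]
  · have hni : n - (n - 1 - i + 1) = i := by omega
    rw [hni, bitd_of_testBit, bitd_of_testBit, hyv_i.1, hyv_i.2]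
    norm_num
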